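/- Let K be a field, n ≥ 2, m ≥ 2 integers with n ≥ (m+1)/2, let i ≠ j in {1,…,n}, and let f(x₁,…,x_m) = Σ_{σ ∈ S_m} α_σ x_{σ(1)}⋯x_{σ(m)} with α_id ≠ 0. Then there exist matrix units E₁,…,E_m ∈ M_n(K) such that f(E₁,…,E_m) = α_id · e_{i,j}. -/

import Mathlib

open Matrix

/-- Evaluation of the multilinear polynomial `∑_{σ ∈ S_m} α_σ x_{σ(1)} ⋯ x_{σ(m)}`. -/
def mlEval {K : Type*} [Field K] {R : Type*} [Ring R] [Algebra K R] {m : ℕ}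
    (α : Equiv.Perm (Fin m) → K) (a : Fin m → R) : R :=
  ∑ σ : Equiv.Perm (Fin m), α σ • (List.ofFn fun i => a (σ i)).prod

section Aux

variable {K : Type*} [Field K] {n : ℕ}

lemma prod_chain : ∀ (m' : ℕ) (g : Fin (m'+1) → Fin n × Fin n),
    (∀ t : Fin m', (g t.castSucc).2 = (g t.succ).1) →
    (List.ofFn fun t => single (g t).1 (g t).2 (1:K)).prod
      = single (g 0).1 (g (Fin.last m')).2 1
  | 0, g, h => by simp
  | (m'+1), g, h => by
    have ih := prod_chain m' (fun t => g t.succ) (fun t => by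
      have h2 := h t.succ
      rwa [← Fin.succ_castSucc] at h2)
    rw [List.ofFn_succ, List.prod_cons, ih]
    have h0 := h 0
    simp only [Fin.castSucc_zero, Fin.succ_zero_eq_one] at h0
    simp only [Fin.succ_zero_eq_one, Fin.succ_last]
    rw [h0, Matrix.single_mul_single_same, one_mul]

lemma prod_break : ∀ (m' : ℕ) (g : Fin (m'+1) → Fin n × Fin n)
    (t : Fin m'), (g t.castSucc).2 ≠ (g t.succ).1 →
    (List.ofFn fun t => single (g t).1 (g t).2 (1:K)).prod = 0
  | 0, g, t, h => t.elim0
  | (m'+1), g, t, h => by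
    rw [List.ofFn_succ, List.prod_cons]
    induction t using Fin.cases with
    | zero =>
      simp only [Fin.castSucc_zero, Fin.succ_zero_eq_one] at h
      by_cases hc : ∀ u : Fin m', ((fun t => g t.succ) u.castSucc).2 = ((fun t => g t.succ) u.succ).1
      · rw [prod_chain m' (fun t => g t.succ) hc]
        exact Matrix.single_mul_single_of_ne (h := by simpa [Fin.succ_zero_eq_one] using h) ..
      · push_neg at hc
        obtain ⟨u, hu⟩ := hc
        rw [prod_break m' (fun t => g t.succ) u hu, mul_zero]
    | succ w =>
      have hw : ((fun t => g t.succ) w.castSucc).2 ≠ ((fun t => g t.succ) w.succ).1 := by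
        show (g w.castSucc.succ).2 ≠ (g w.succ.succ).1
        rw [Fin.succ_castSucc]; exact h
      rw [prod_break m' (fun t => g t.succ) w hw, mul_zero]


lemma perm_key (m' : ℕ) (s : Equiv.Perm (Fin (m'+1)))
    (h : ∀ t : Fin m', (((s t.castSucc : Fin (m'+1)) : ℕ) + 1) / 2
        = ((s t.succ : Fin (m'+1)) : ℕ) / 2) : s = 1 := by
  have step : ∀ t : Fin m', ((s t.succ : ℕ) = (s t.castSucc : ℕ) + 1) ∨
      ((s t.castSucc : ℕ) % 2 = 1 ∧ (s t.succ : ℕ) = (s t.castSucc : ℕ) + 2) := by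
    intro t
    have h1 := h t
    have hne : ((s t.castSucc : Fin (m'+1)) : ℕ) ≠ ((s t.succ : Fin (m'+1)) : ℕ) := by
      intro e
      have : t.castSucc = t.succ := s.injective (Fin.ext e)
      exact (Fin.castSucc_lt_succ (i := t)).ne this
    omega
  have mono : ∀ t : Fin (m'+1), (s 0 : ℕ) + (t : ℕ) ≤ (s t : ℕ) := by
    intro t
    induction t using Fin.induction with
    | zero => simp
    | succ t ih =>
      have hs := step t
      simp only [Fin.coe_castSucc] at ih
      simp only [Fin.val_succ]
      omega
  have h0 : (s 0 : ℕ) = 0 := by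
    have hlast := mono (Fin.last m')
    have hl : (s (Fin.last m') : ℕ) < m'+1 := (s _).isLt
    simp only [Fin.val_last] at hlast
    omega
  have hval : ∀ t : Fin (m'+1), (s t : ℕ) = (t : ℕ) := by
    intro t
    induction t using Fin.induction with
    | zero => simpa using h0
    | succ t ih =>
      simp only [Fin.coe_castSucc] at ih
      simp only [Fin.val_succ]
      rcases step t with h1 | ⟨hodd, h2⟩
      · omega
      · exfalso
        have hlt : (t : ℕ) + 1 < m' + 1 := Nat.succ_lt_succ t.isLt
        set u := s.symm ⟨(t : ℕ) + 1, hlt⟩ with hu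
        have hsu : (s u : ℕ) = (t : ℕ) + 1 := by
          rw [hu]; rw [Equiv.apply_symm_apply]
        have hune : u ≠ 0 := by
          intro e; rw [e] at hsu; omega
        obtain ⟨w, hw⟩ := Fin.eq_succ_of_ne_zero hune
        rw [hw] at hsu
        rcases step w with h1' | ⟨hodd', h2'⟩
        · have hwt : (s w.castSucc : ℕ) = (s t.castSucc : ℕ) := by omega
          have : w.castSucc = t.castSucc := s.injective (Fin.ext hwt)
          have hwt2 : w = t := Fin.castSucc_injective _ this
          rw [hwt2] at hsu
          omega
        · omega
  refine Equiv.ext fun t => Fin.ext ?_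
  simpa using hval t

end Aux

theorem stmt_16 (K : Type*) [Field K] (n m : ℕ) (hn : 2 ≤ n) (hm : 2 ≤ m)
    (hbound : m + 1 ≤ 2 * n) (i j : Fin n) (hij : i ≠ j)
    (α : Equiv.Perm (Fin m) → K) (hα : α 1 ≠ 0) :
    ∃ E : Fin m → Matrix (Fin n) (Fin n) K,
      (∀ k : Fin m, ∃ p q : Fin n, E k = Matrix.single p q (1 : K)) ∧
      mlEval α E = α 1 • Matrix.single i j (1 : K) := by
  obtain ⟨m', rfl⟩ : ∃ m', m = m' + 1 := ⟨m - 1, by omega⟩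
  have hdn : (m' + 1) / 2 + 1 ≤ n := by omega
  set d : ℕ := (m' + 1) / 2 with hd
  have hd1 : 1 ≤ d := by omega
  set u : Fin (d+1) → Fin n := Fin.castLE hdn with hu'
  have uinj : Function.Injective u := Fin.castLE_injective hdn
  have h01 : u 0 ≠ u (Fin.last d) := by
    intro e
    have := uinj e
    have : (0 : ℕ) = d := congrArg Fin.val this
    omega
  set b : Fin n := Equiv.swap (u 0) i (u (Fin.last d)) with hb
  have hbi : b ≠ i := by
    rw [hb]
    intro e
    have : u (Fin.last d) = u 0 := (Equiv.swap (u 0) i).injective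
      (by rw [e, Equiv.swap_apply_left])
    exact h01 this.symm
  set π : Equiv.Perm (Fin n) := (Equiv.swap (u 0) i).trans (Equiv.swap b j) with hπ
  set v : Fin (d+1) → Fin n := fun x => π (u x) with hv
  have vinj : Function.Injective v := fun a b e => uinj (π.injective e)
  have hv0 : v 0 = i := by
    rw [hv]
    simp only [hπ, Equiv.trans_apply, Equiv.swap_apply_left]
    exact Equiv.swap_apply_of_ne_of_ne hbi.symm hij
  have hvl : v (Fin.last d) = j := by
    rw [hv]
    simp only [hπ, Equiv.trans_apply, ← hb, Equiv.swap_apply_left]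
  set q : Fin (m'+2) → Fin n := fun t => v ⟨(t : ℕ) / 2, by have := t.isLt; omega⟩ with hq
  refine ⟨fun k => single (q k.castSucc) (q k.succ) 1, fun k => ⟨_, _, rfl⟩, ?_⟩
  unfold mlEval
  rw [Finset.sum_eq_single (1 : Equiv.Perm (Fin (m'+1)))]
  · congr 1
    have hchain : (List.ofFn fun t : Fin (m'+1) =>
          single (q t.castSucc) (q t.succ) (1:K)).prod
        = single (q ((0 : Fin (m'+1)).castSucc)) (q (Fin.last m').succ) 1 :=
      prod_chain m' (fun t => (q t.castSucc, q t.succ)) (fun t => by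
        show q t.castSucc.succ = q t.succ.castSucc
        rw [Fin.succ_castSucc])
    have e0 : q ((0 : Fin (m'+1)).castSucc) = i := by
      rw [← hv0]
      show v _ = v 0
      exact congrArg v (Fin.ext (by simp))
    have el : q (Fin.last m').succ = j := by
      rw [← hvl]
      show v _ = v (Fin.last d)
      exact congrArg v (Fin.ext (by simp only [Fin.val_succ, Fin.val_last]; try omega))
    simp only [Equiv.Perm.one_apply]
    rw [hchain, e0, el]
  · intro σ _ hσ
    have hzero : (List.ofFn fun t => single (q (σ t).castSucc) (q (σ t).succ) (1:K)).prod = 0 := by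
      by_contra hc
      apply hσ
      apply perm_key
      intro t
      by_contra hne
      apply hc
      apply prod_break m' (fun x => (q (σ x).castSucc, q (σ x).succ)) t
      show q (σ t.castSucc).succ ≠ q (σ t.succ).castSucc
      intro e
      apply hne
      have e2 : v ⟨(((σ t.castSucc : Fin (m'+1)) : ℕ) + 1) / 2,
            by have := (σ t.castSucc).isLt; omega⟩
          = v ⟨((σ t.succ : Fin (m'+1)) : ℕ) / 2,
            by have := (σ t.succ).isLt; omega⟩ := e
      exact congrArg Fin.val (vinj e2)
    rw [hzero, smul_zero]
  · intro hmem
    exact absurd (Finset.mem_univ _) hmem
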